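/- The radial function u(r,t) = a₀/(1 − 48 a₀ t) · r⁴ + (4/3) ln(1 − 48 a₀ t), defined for r ≥ 0 and t with 1 − 48 a₀ t > 0, satisfies the radial equation uₜ = (u_r u_{rr})/r − Δ_r² u for r > 0, where Δ_r v = (1/r)(r v_r)_r. -/
import Mathlib


noncomputable section

/-- The explicit radial solution on the unit disc. -/
def U (a₀ r t : ℝ) : ℝ :=
  a₀ / (1 - 48 * a₀ * t) * r ^ 4 + (4 / 3) * Real.log (1 - 48 * a₀ * t)

/-- The two-dimensional radial Laplacian `Δᵣ v = (1/r)(r vᵣ)ᵣ`. -/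
def radLap (v : ℝ → ℝ) (r : ℝ) : ℝ :=
  (1 / r) * deriv (fun s => s * deriv v s) r

/-- The explicit radial solution satisfies `uₜ = uᵣ uᵣᵣ / r − Δᵣ² u` for `r > 0` and
`1 − 48a₀t > 0`. -/
theorem stmt4 (a₀ r t : ℝ) (hr : r > 0) (ht : 1 - 48 * a₀ * t > 0) :
    deriv (fun s => U a₀ r s) t =
      (deriv (fun r' => U a₀ r' t) r * iteratedDeriv 2 (fun r' => U a₀ r' t) r) / r -
        radLap (radLap (fun r' => U a₀ r' t)) r := by
  set c : ℝ := a₀ / (1 - 48 * a₀ * t) with hc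
  set u : ℝ → ℝ := fun r' => U a₀ r' t with husup
  -- spatial first derivative
  have hu : deriv u = fun s => 4 * c * s ^ 3 := by
    funext s
    have h : HasDerivAt u (c * (4 * s ^ 3)) s := by
      simpa [u, U] using ((hasDerivAt_pow 4 s).const_mul c).add_const
        ((4 / 3) * Real.log (1 - 48 * a₀ * t))
    rw [h.deriv]; ring
  -- second derivative
  have hu2 : iteratedDeriv 2 u r = 12 * c * r ^ 2 := by
    rw [iteratedDeriv_succ, iteratedDeriv_one, hu]
    have h : HasDerivAt (fun s : ℝ => 4 * c * s ^ 3) (4 * c * (3 * r ^ 2)) r :=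
      (hasDerivAt_pow 3 r).const_mul (4 * c)
    rw [h.deriv]; ring
  -- first radial Laplacian
  have hL : ∀ s : ℝ, s ≠ 0 → radLap u s = 16 * c * s ^ 2 := by
    intro s hs
    have h : HasDerivAt (fun x : ℝ => x * deriv u x) (4 * c * (4 * s ^ 3)) s := by
      have h0 : HasDerivAt (fun x : ℝ => 4 * c * x ^ 4) (4 * c * (4 * s ^ 3)) s :=
        (hasDerivAt_pow 4 s).const_mul (4 * c)
      refine h0.congr_of_eventuallyEq ?_
      filter_upwards with x
      rw [hu]; ring
    rw [radLap, h.deriv]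
    field_simp; ring
  -- derivative of the first radial Laplacian away from 0
  have hdL : ∀ x : ℝ, x ≠ 0 → deriv (radLap u) x = 32 * c * x := by
    intro x hx
    have hE : radLap u =ᶠ[nhds x] fun s => 16 * c * s ^ 2 := by
      filter_upwards [eventually_ne_nhds hx] with y hy using hL y hy
    rw [hE.deriv_eq]
    have h : HasDerivAt (fun s : ℝ => 16 * c * s ^ 2) (16 * c * (2 * x ^ 1)) x :=
      (hasDerivAt_pow 2 x).const_mul (16 * c)
    rw [h.deriv]; ring
  -- second radial Laplacian
  have hLL : radLap (radLap u) r = 64 * c := by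
    have hE2 : (fun x : ℝ => x * deriv (radLap u) x) =ᶠ[nhds r]
        fun x => 32 * c * x ^ 2 := by
      filter_upwards [eventually_ne_nhds hr.ne'] with x hx
      rw [hdL x hx]; ring
    rw [radLap, hE2.deriv_eq]
    have h : HasDerivAt (fun s : ℝ => 32 * c * s ^ 2) (32 * c * (2 * r ^ 1)) r :=
      (hasDerivAt_pow 2 r).const_mul (32 * c)
    rw [h.deriv]
    field_simp; ring
  -- time derivative
  have hg : HasDerivAt (fun s : ℝ => 1 - 48 * a₀ * s) (-(48 * a₀)) t := by
    simpa using ((hasDerivAt_id t).const_mul (48 * a₀)).const_sub 1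
  have hT : HasDerivAt (fun s => U a₀ r s)
      ((0 * (1 - 48 * a₀ * t) - a₀ * (-(48 * a₀))) / (1 - 48 * a₀ * t) ^ 2 * r ^ 4
        + (4 / 3) * ((-(48 * a₀)) / (1 - 48 * a₀ * t))) t := by
    exact (((hasDerivAt_const t a₀).div hg ht.ne').mul_const (r ^ 4)).add
      ((hg.log ht.ne').const_mul (4 / 3))
  rw [hT.deriv, hu, hu2, hLL, hc]
  field_simp
  ring
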